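/- Covariance identity for auxiliary variables (Theorem 1, algebraic part): Let (Λ,Ω) be a linear SEM over V, let z, y ∈ V and W ⊆ V, and let E be a set of directed edges all with head z. Define the auxiliary variable z* = z − Σ_{e∈E} Λ_{Ta(e)z}·Ta(e), whose partial covariance with y given W is σ(z*,y|W) = σ(z,y|W) − Σ_{e∈E} Λ_{Ta(e)z}·σ(Ta(e),y|W), all computed from Σ(Λ,Ω). Let Λ' be Λ with the entries of E set to zero. If no vertex of W ∪ {y} is a descendant of z in the digraph of Λ, then σ(z*,y|W) computed from Σ(Λ,Ω) equals σ(z,y|W) computed from Σ(Λ',Ω). -/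

import Mathlib

open scoped Classical Matrix

namespace SEMPaper

variable {V : Type}

/-- `v` is a descendant of `u` in the digraph of `Λ` (edge `i → j` iff `Λ i j ≠ 0`). -/
def descMat (Λ : Matrix V V ℝ) (u v : V) : Prop :=
  Relation.ReflTransGen (fun i j => Λ i j ≠ 0) u v

/-- `Λ` can be put in strictly lower triangular form by reordering `V` (acyclicity). -/
def AcyclicMat (Λ : Matrix V V ℝ) : Prop :=
  ∃ r : V → ℕ, Function.Injective r ∧ ∀ i j, Λ i j ≠ 0 → r i < r j

/-- The implied covariance matrix `Σ = (I − Λ)⁻ᵀ Ω (I − Λ)⁻¹` of a linear SEM. -/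
noncomputable def implCov [Fintype V] [DecidableEq V] (Λ Ω : Matrix V V ℝ) : Matrix V V ℝ :=
  ((1 - Λ)⁻¹)ᵀ * Ω * (1 - Λ)⁻¹

/-- The submatrix `Σ_{WW}`. -/
noncomputable def subCov [Fintype V] [DecidableEq V] (S : Matrix V V ℝ) (W : Finset V) :
    Matrix W W ℝ :=
  Matrix.of fun a b : W => S a.1 b.1

/-- The partial covariance `σ(x,y|W) = Σ_{xy} − Σ_{xW} (Σ_{WW})⁻¹ Σ_{Wy}`. -/
noncomputable def partialCov [Fintype V] [DecidableEq V]
    (S : Matrix V V ℝ) (x y : V) (W : Finset V) : ℝ :=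
  S x y - ∑ i : W, ∑ j : W, S x i.1 * (subCov S W)⁻¹ i j * S j.1 y

/-- The partial error covariance `σ(u_x,y|W) = C_{xy} − C_{xW} (Σ_{WW})⁻¹ Σ_{Wy}` with
`C = Ω (I − Λ)⁻¹`. -/
noncomputable def partialErrCov [Fintype V] [DecidableEq V]
    (Λ Ω : Matrix V V ℝ) (x y : V) (W : Finset V) : ℝ :=
  (Ω * (1 - Λ)⁻¹) x y -
    ∑ i : W, ∑ j : W,
      (Ω * (1 - Λ)⁻¹) x i.1 * (subCov (implCov Λ Ω) W)⁻¹ i j * implCov Λ Ω j.1 y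


section AuxLemmas
variable [Fintype V] [DecidableEq V]
set_option linter.unusedSectionVars false

lemma desc_le {Λ : Matrix V V ℝ} {r : V → ℕ} (hr : ∀ i j, Λ i j ≠ 0 → r i < r j)
    {u v : V} (h : descMat Λ u v) : r u ≤ r v := by
  induction h with
  | refl => exact le_refl _
  | tail _ h ih => exact ih.trans (hr _ _ h).le

lemma pow_chain {Λ : Matrix V V ℝ} {r : V → ℕ} (hr : ∀ i j, Λ i j ≠ 0 → r i < r j) :
    ∀ k (i j : V), (Λ ^ (k+1)) i j ≠ 0 → r i + k < r j := by
  intro k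
  induction k with
  | zero => intro i j h; simpa using hr i j (by simpa using h)
  | succ k ih =>
    intro i j h
    rw [pow_succ, Matrix.mul_apply] at h
    obtain ⟨m, -, hm⟩ := Finset.exists_ne_zero_of_sum_ne_zero h
    have h1 : (Λ^(k+1)) i m ≠ 0 := fun h0 => hm (by simp [h0])
    have h2 : Λ m j ≠ 0 := fun h0 => hm (by simp [h0])
    have := ih i m h1
    have := hr m j h2
    omega

lemma pow_eq_zero {Λ : Matrix V V ℝ} (h : AcyclicMat Λ) : ∃ n, Λ ^ n = 0 := by
  obtain ⟨r, -, hr⟩ := h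
  refine ⟨Finset.univ.sup r + 1, ?_⟩
  ext i j
  simp only [Matrix.zero_apply]
  by_contra hij
  have h1 := pow_chain hr _ i j hij
  have h2 : r j ≤ Finset.univ.sup r := Finset.le_sup (Finset.mem_univ j)
  omega

lemma one_sub_inv_eq {Λ : Matrix V V ℝ} {n : ℕ} (hn : Λ ^ n = 0) :
    (1 - Λ)⁻¹ = ∑ k ∈ Finset.range n, Λ ^ k := by
  apply Matrix.inv_eq_right_inv
  have h2 : (1 - Λ) * ∑ k ∈ Finset.range n, Λ ^ k = 1 - Λ ^ n := by
    rw [(neg_sub Λ 1).symm, neg_mul, mul_geom_sum, hn, neg_sub, sub_zero]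
  rw [h2, hn, sub_zero]

lemma one_sub_mul_inv {Λ : Matrix V V ℝ} (h : AcyclicMat Λ) :
    (1 - Λ) * (1 - Λ)⁻¹ = 1 := by
  obtain ⟨n, hn⟩ := pow_eq_zero h
  rw [one_sub_inv_eq hn, (neg_sub Λ 1).symm, neg_mul, mul_geom_sum, hn, neg_sub, sub_zero]

lemma inv_mul_one_sub {Λ : Matrix V V ℝ} (h : AcyclicMat Λ) :
    (1 - Λ)⁻¹ * (1 - Λ) = 1 := by
  obtain ⟨n, hn⟩ := pow_eq_zero h
  rw [one_sub_inv_eq hn, (neg_sub Λ 1).symm, mul_neg, geom_sum_mul, hn, neg_sub, sub_zero]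

lemma pow_ne_zero_desc {Λ : Matrix V V ℝ} :
    ∀ (k : ℕ) {u v : V}, (Λ ^ k) u v ≠ 0 → descMat Λ u v := by
  intro k
  induction k with
  | zero =>
    intro u v h
    rw [pow_zero] at h
    rcases eq_or_ne u v with rfl | hne
    · exact Relation.ReflTransGen.refl
    · simp [Matrix.one_apply, hne] at h
  | succ k ih =>
    intro u v h
    rw [pow_succ, Matrix.mul_apply] at h
    obtain ⟨m, -, hm⟩ := Finset.exists_ne_zero_of_sum_ne_zero h
    have h1 : (Λ^k) u m ≠ 0 := fun h0 => hm (by simp [h0])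
    have h2 : Λ m v ≠ 0 := fun h0 => hm (by simp [h0])
    exact Relation.ReflTransGen.tail (ih h1) h2

lemma inv_ne_zero_desc {Λ : Matrix V V ℝ} (h : AcyclicMat Λ) {u v : V}
    (huv : (1 - Λ)⁻¹ u v ≠ 0) : descMat Λ u v := by
  obtain ⟨n, hn⟩ := pow_eq_zero h
  rw [one_sub_inv_eq hn, Matrix.sum_apply] at huv
  obtain ⟨k, -, hk⟩ := Finset.exists_ne_zero_of_sum_ne_zero huv
  exact pow_ne_zero_desc k hk

lemma inv_diag_one {Λ : Matrix V V ℝ} (h : AcyclicMat Λ) (v : V) :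
    (1 - Λ)⁻¹ v v = 1 := by
  have h1 := one_sub_mul_inv h
  have hB : (1 - Λ)⁻¹ = 1 + Λ * (1 - Λ)⁻¹ := by
    have h2 : (1 - Λ)⁻¹ - Λ * (1 - Λ)⁻¹ = 1 := by
      have h3 : (1 - Λ) * (1 - Λ)⁻¹ = (1 - Λ)⁻¹ - Λ * (1 - Λ)⁻¹ := by
        rw [sub_mul, one_mul]
      rw [← h3]; exact h1
    linear_combination (norm := abel) h2
  obtain ⟨r, -, hr⟩ := id h
  conv_lhs => rw [hB]
  rw [Matrix.add_apply, Matrix.one_apply_eq, Matrix.mul_apply]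
  have : ∀ m ∈ Finset.univ, Λ v m * (1 - Λ)⁻¹ m v = 0 := by
    intro m _
    by_cases hvm : Λ v m = 0
    · rw [hvm, zero_mul]
    · have hBmv : (1 - Λ)⁻¹ m v = 0 := by
        by_contra hne
        have hd := desc_le hr (inv_ne_zero_desc h hne)
        exact absurd (hr v m hvm) (by omega)
      rw [hBmv, mul_zero]
  rw [Finset.sum_eq_zero this, add_zero]

end AuxLemmas

/-- **Theorem 1 (algebraic part).** For an auxiliary variable
`z* = z − ∑_{e ∈ E} Λ_{Ta(e) z} · Ta(e)` built from edges `E` with head `z`, if no vertex of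
`W ∪ {y}` is a descendant of `z`, then `σ(z*,y|W)` computed in `(Λ,Ω)` equals `σ(z,y|W)`
computed in `(Λ',Ω)`, where `Λ'` is `Λ` with the entries of `E` set to zero. -/

theorem aux_var_covariance [Fintype V] [DecidableEq V]
    (Λ Ω : Matrix V V ℝ) (hacyc : AcyclicMat Λ) (hΩ : Ω.PosDef)
    (z y : V) (W : Finset V)
    (E : Finset (V × V)) (hE : ∀ e ∈ E, Λ e.1 e.2 ≠ 0 ∧ e.2 = z)
    (Λ' : Matrix V V ℝ) (hΛ' : ∀ i j, Λ' i j = if (i, j) ∈ E then 0 else Λ i j)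
    (hdesc : ∀ v : V, (v ∈ W ∨ v = y) → ¬ descMat Λ z v) :
    partialCov (implCov Λ Ω) z y W
        - ∑ e ∈ E, Λ e.1 z * partialCov (implCov Λ Ω) e.1 y W
      = partialCov (implCov Λ' Ω) z y W := by
  classical
  -- Λ' has entries which are a subset of Λ's
  have hΛ'ne : ∀ i j, Λ' i j ≠ 0 → Λ i j ≠ 0 := by
    intro i j hij
    rw [hΛ'] at hij
    by_cases hm : (i, j) ∈ E
    · simp [hm] at hij
    · rwa [if_neg hm] at hij
  have hacyc' : AcyclicMat Λ' := by
    obtain ⟨r, hrinj, hr⟩ := hacyc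
    exact ⟨r, hrinj, fun i j hij => hr i j (hΛ'ne i j hij)⟩
  set B := (1 - Λ)⁻¹ with hBdef
  set B' := (1 - Λ')⁻¹ with hB'def
  set D := Λ - Λ' with hDdef
  have hD : ∀ i j, D i j = if (i, j) ∈ E then Λ i j else 0 := by
    intro i j
    rw [hDdef, Matrix.sub_apply, hΛ']
    split <;> ring
  have hDz : ∀ i j, j ≠ z → D i j = 0 := by
    intro i j hj
    rw [hD, if_neg]
    intro hmem
    exact hj (hE _ hmem).2
  have hBDB : B * D * B' = B - B' := by
    have e1 : B * (1 - Λ') * B' = B := by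
      rw [Matrix.mul_assoc, one_sub_mul_inv hacyc', Matrix.mul_one]
    have e2 : B * (1 - Λ) * B' = B' := by
      rw [inv_mul_one_sub hacyc, Matrix.one_mul]
    have e3 : D = (1 - Λ') - (1 - Λ) := by rw [hDdef]; abel
    calc B * D * B' = B * ((1 - Λ') - (1 - Λ)) * B' := by rw [← e3]
      _ = B * (1 - Λ') * B' - B * (1 - Λ) * B' := by
          rw [Matrix.mul_sub, Matrix.sub_mul]
      _ = B - B' := by rw [e1, e2]
  have hB'zero : ∀ v, ¬ descMat Λ z v → B' z v = 0 := by
    intro v hv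
    by_contra hne
    exact hv (Relation.ReflTransGen.mono (fun i j h => hΛ'ne i j h) _ _ (inv_ne_zero_desc hacyc' hne))
  have hBD_col : ∀ i b, b ≠ z → (B * D) i b = 0 := by
    intro i b hb
    rw [Matrix.mul_apply]
    exact Finset.sum_eq_zero fun a _ => by rw [hDz a b hb, mul_zero]
  have hcol : ∀ v, ¬ descMat Λ z v → ∀ i, B' i v = B i v := by
    intro v hv i
    have h0 : (B * D * B') i v = 0 := by
      rw [Matrix.mul_apply]
      apply Finset.sum_eq_zero
      intro b _
      by_cases hb : b = z
      · subst hb; rw [hB'zero v hv, mul_zero]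
      · rw [hBD_col i b hb, zero_mul]
    have h1 : (B - B') i v = 0 := by rw [← hBDB]; exact h0
    rw [Matrix.sub_apply] at h1
    linarith
  have hcolz : ∀ i, B' i z = B i z - ∑ m, B i m * D m z := by
    intro i
    have h0 : (B * D * B') i z = ∑ m, B i m * D m z := by
      rw [Matrix.mul_apply, Finset.sum_eq_single z]
      · rw [hB'def, inv_diag_one hacyc' z, mul_one, Matrix.mul_apply]
      · intro b _ hb
        rw [hBD_col i b hb, zero_mul]
      · intro h; exact absurd (Finset.mem_univ z) h
    have h1 : (B - B') i z = ∑ m, B i m * D m z := by rw [← hBDB]; exact h0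
    rw [Matrix.sub_apply] at h1
    linarith
  set Sig := implCov Λ Ω with hSigdef
  set Sig' := implCov Λ' Ω with hSig'def
  have hS : ∀ u v, Sig u v = ∑ i, ∑ j, B i u * Ω i j * B j v := by
    intro u v
    rw [hSigdef, implCov]
    simp only [Matrix.mul_apply, Matrix.transpose_apply, Finset.sum_mul]
    rw [Finset.sum_comm]
  have hS' : ∀ u v, Sig' u v = ∑ i, ∑ j, B' i u * Ω i j * B' j v := by
    intro u v
    rw [hSig'def, implCov]
    simp only [Matrix.mul_apply, Matrix.transpose_apply, Finset.sum_mul]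
    rw [Finset.sum_comm]
  have hS'uv : ∀ u v, ¬ descMat Λ z u → ¬ descMat Λ z v → Sig' u v = Sig u v := by
    intro u v hu hv
    rw [hS', hS]
    refine Finset.sum_congr rfl fun i _ => Finset.sum_congr rfl fun j _ => ?_
    rw [hcol u hu i, hcol v hv j]
  have hS'z : ∀ v, ¬ descMat Λ z v → Sig' z v = Sig z v - ∑ m, D m z * Sig m v := by
    intro v hv
    rw [hS' z v]
    have step : ∀ i j : V, B' i z * Ω i j * B' j v
        = B i z * Ω i j * B j v - ∑ m, B i m * D m z * (Ω i j * B j v) := by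
      intro i j
      rw [hcolz i, hcol v hv j, sub_mul, sub_mul, Finset.sum_mul, Finset.sum_mul]
      congr 1
      refine Finset.sum_congr rfl fun m _ => by ring
    simp only [step, Finset.sum_sub_distrib]
    rw [← hS z v]
    congr 1
    calc ∑ i, ∑ j, ∑ m, B i m * D m z * (Ω i j * B j v)
        = ∑ i, ∑ m, ∑ j, B i m * D m z * (Ω i j * B j v) :=
          Finset.sum_congr rfl fun i _ => Finset.sum_comm
      _ = ∑ m, ∑ i, ∑ j, B i m * D m z * (Ω i j * B j v) := Finset.sum_comm
      _ = ∑ m, D m z * Sig m v := by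
          refine Finset.sum_congr rfl fun m _ => ?_
          rw [hS m v, Finset.mul_sum]
          refine Finset.sum_congr rfl fun i _ => ?_
          rw [Finset.mul_sum]
          exact Finset.sum_congr rfl fun j _ => by ring
  -- rewrite the correction sum over E
  have hDE : ∀ v, ∑ m, D m z * Sig m v = ∑ e ∈ E, Λ e.1 z * Sig e.1 v := by
    intro v
    have h1 : ∑ m, D m z * Sig m v
        = ∑ m ∈ Finset.univ.filter (fun m => (m, z) ∈ E), Λ m z * Sig m v := by
      rw [Finset.sum_filter]
      refine Finset.sum_congr rfl fun m _ => ?_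
      rw [hD m z]
      split <;> simp
    rw [h1]
    refine (Finset.sum_nbij' (i := fun e : V × V => e.1) (j := fun m : V => (m, z))
      ?_ ?_ ?_ ?_ ?_).symm
    · intro e he
      simp only [Finset.mem_filter, Finset.mem_univ, true_and]
      show (e.1, z) ∈ E
      rw [← (hE e he).2, Prod.mk.eta]
      exact he
    · intro m hm
      simp only [Finset.mem_filter] at hm
      exact hm.2
    · intro e he
      show (e.1, z) = e
      rw [← (hE e he).2, Prod.mk.eta]
    · intro m hm
      rfl
    · intro e he
      show Λ e.1 z * Sig e.1 v = Λ e.1 z * Sig e.1 v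
      rfl
  have hT : ∀ v, ¬ descMat Λ z v → Sig' z v = Sig z v - ∑ e ∈ E, Λ e.1 z * Sig e.1 v := by
    intro v hv
    rw [hS'z v hv, hDE v]
  -- the submatrices agree
  have hsub : subCov Sig' W = subCov Sig W := by
    ext i j
    exact hS'uv i.1 j.1 (hdesc i.1 (Or.inl i.2)) (hdesc j.1 (Or.inl j.2))
  have hy : ¬ descMat Λ z y := hdesc y (Or.inr rfl)
  set K := (subCov Sig W)⁻¹ with hKdef
  set P := ∑ i : W, ∑ j : W, Sig z i.1 * K i j * Sig j.1 y with hPdef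
  set Q : V × V → ℝ := fun e => ∑ i : W, ∑ j : W, Sig e.1 i.1 * K i j * Sig j.1 y with hQdef
  have hjy : ∀ j : W, Sig' j.1 y = Sig j.1 y :=
    fun j => hS'uv j.1 y (hdesc j.1 (Or.inl j.2)) hy
  have hzi : ∀ i : W, Sig' z i.1 = Sig z i.1 - ∑ e ∈ E, Λ e.1 z * Sig e.1 i.1 :=
    fun i => hT i.1 (hdesc i.1 (Or.inl i.2))
  have hpc_e : ∀ e : V × V, partialCov Sig e.1 y W = Sig e.1 y - Q e := fun e => rfl
  have hpc_z : partialCov Sig z y W = Sig z y - P := rfl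
  have hswap : ∑ i : W, ∑ j : W, (∑ e ∈ E, Λ e.1 z * Sig e.1 i.1) * K i j * Sig j.1 y
      = ∑ e ∈ E, Λ e.1 z * Q e := by
    calc ∑ i : W, ∑ j : W, (∑ e ∈ E, Λ e.1 z * Sig e.1 i.1) * K i j * Sig j.1 y
        = ∑ i : W, ∑ j : W, ∑ e ∈ E, Λ e.1 z * (Sig e.1 i.1 * K i j * Sig j.1 y) := by
          refine Finset.sum_congr rfl fun i _ => Finset.sum_congr rfl fun j _ => ?_
          rw [Finset.sum_mul, Finset.sum_mul]
          exact Finset.sum_congr rfl fun e _ => by ring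
      _ = ∑ i : W, ∑ e ∈ E, ∑ j : W, Λ e.1 z * (Sig e.1 i.1 * K i j * Sig j.1 y) :=
          Finset.sum_congr rfl fun i _ => Finset.sum_comm
      _ = ∑ e ∈ E, ∑ i : W, ∑ j : W, Λ e.1 z * (Sig e.1 i.1 * K i j * Sig j.1 y) :=
          Finset.sum_comm
      _ = ∑ e ∈ E, Λ e.1 z * Q e := by
          refine Finset.sum_congr rfl fun e _ => ?_
          rw [hQdef, Finset.mul_sum]
          refine Finset.sum_congr rfl fun i _ => ?_
          rw [Finset.mul_sum]
  have hpc' : partialCov Sig' z y W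
      = (Sig z y - ∑ e ∈ E, Λ e.1 z * Sig e.1 y) - (P - ∑ e ∈ E, Λ e.1 z * Q e) := by
    rw [partialCov, hsub, hT y hy]
    congr 1
    calc ∑ i : W, ∑ j : W, Sig' z i.1 * K i j * Sig' j.1 y
        = ∑ i : W, ∑ j : W,
            (Sig z i.1 * K i j * Sig j.1 y
              - (∑ e ∈ E, Λ e.1 z * Sig e.1 i.1) * K i j * Sig j.1 y) := by
          refine Finset.sum_congr rfl fun i _ => Finset.sum_congr rfl fun j _ => ?_
          rw [hjy j, hzi i]
          ring
      _ = P - ∑ e ∈ E, Λ e.1 z * Q e := by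
          simp only [Finset.sum_sub_distrib]
          rw [hswap, hPdef]
  rw [hpc', hpc_z]
  simp only [hpc_e]
  simp only [mul_sub, Finset.sum_sub_distrib]
  ring

end SEMPaper
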